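/- Let f be the standard normal density, Q its tail function, Φ its cdf. For all real x₁, x₂: 2(Q(x₁)+Φ(x₂)) + (x₁f(x₁) − x₂f(x₂)) − (√(x₁²+4)·f(x₁) + √(x₂²+4)·f(x₂)) > 0. -/

import Mathlib

open Real MeasureTheory Set Filter

noncomputable def stdNormalPdf (x : ℝ) : ℝ := (Real.sqrt (2 * Real.pi))⁻¹ * Real.exp (-x ^ 2 / 2)

noncomputable def gaussQ (x : ℝ) : ℝ := ∫ t in Set.Ici x, stdNormalPdf t

noncomputable def gaussPhi (x : ℝ) : ℝ := ∫ t in Set.Iic x, stdNormalPdf t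

lemma pdf_pos (x : ℝ) : 0 < stdNormalPdf x := by
  unfold stdNormalPdf
  positivity

lemma pdf_integrable : Integrable stdNormalPdf := by
  have : Integrable (fun x : ℝ => Real.exp (-(1/2) * x ^ 2)) :=
    integrable_exp_neg_mul_sq (by norm_num)
  have h := this.const_mul (Real.sqrt (2 * Real.pi))⁻¹
  refine h.congr (Filter.Eventually.of_forall fun x => ?_)
  unfold stdNormalPdf; ring_nf

lemma pdf_cont : Continuous stdNormalPdf := by
  unfold stdNormalPdf
  continuity

lemma pdf_even (x : ℝ) : stdNormalPdf (-x) = stdNormalPdf x := by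
  unfold stdNormalPdf; ring_nf

lemma gaussQ_eq (x : ℝ) : gaussQ x = gaussQ 0 - ∫ t in (0:ℝ)..x, stdNormalPdf t := by
  have h1 := intervalIntegral.integral_Iic_add_Ioi (b := (0:ℝ)) (μ := volume)
    (f := stdNormalPdf) pdf_integrable.integrableOn pdf_integrable.integrableOn
  have h2 := intervalIntegral.integral_Iic_add_Ioi (b := x) (μ := volume)
    (f := stdNormalPdf) pdf_integrable.integrableOn pdf_integrable.integrableOn
  have h3 := intervalIntegral.integral_Iic_sub_Iic (a := (0:ℝ)) (b := x) (μ := volume)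
    pdf_integrable.integrableOn pdf_integrable.integrableOn
  unfold gaussQ
  rw [integral_Ici_eq_integral_Ioi, integral_Ici_eq_integral_Ioi]
  linarith

lemma gaussQ_hasDeriv (x : ℝ) : HasDerivAt gaussQ (-stdNormalPdf x) x := by
  have hFTC : HasDerivAt (fun u => ∫ t in (0:ℝ)..u, stdNormalPdf t) (stdNormalPdf x) x :=
    intervalIntegral.integral_hasDerivAt_right pdf_integrable.intervalIntegrable
      (pdf_cont.stronglyMeasurableAtFilter _ _) pdf_cont.continuousAt
  have h := (hasDerivAt_const x (gaussQ 0)).sub hFTC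
  rw [zero_sub] at h
  exact h.congr_of_eventuallyEq (Filter.Eventually.of_forall fun u => gaussQ_eq u)

lemma gaussQ_tendsto : Tendsto gaussQ atTop (nhds 0) := by
  have h : Tendsto (fun x => ∫ t in (0:ℝ)..x, stdNormalPdf t) atTop
      (nhds (∫ t in Set.Ioi (0:ℝ), stdNormalPdf t)) :=
    MeasureTheory.intervalIntegral_tendsto_integral_Ioi 0 pdf_integrable.integrableOn tendsto_id
  have h2 : Tendsto (fun x => gaussQ 0 - ∫ t in (0:ℝ)..x, stdNormalPdf t) atTop
      (nhds (gaussQ 0 - ∫ t in Set.Ioi (0:ℝ), stdNormalPdf t)) := tendsto_const_nhds.sub h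
  have h3 : gaussQ 0 - ∫ t in Set.Ioi (0:ℝ), stdNormalPdf t = 0 := by
    unfold gaussQ; rw [integral_Ici_eq_integral_Ioi]; ring
  rw [h3] at h2
  exact h2.congr fun x => (gaussQ_eq x).symm

lemma phi_eq (x : ℝ) : gaussPhi x = gaussQ (-x) := by
  unfold gaussPhi gaussQ
  rw [integral_Ici_eq_integral_Ioi, ← integral_comp_neg_Iic]
  simp_rw [pdf_even]

noncomputable def gAux (x : ℝ) : ℝ :=
  2 * gaussQ x + (x - Real.sqrt (x ^ 2 + 4)) * stdNormalPdf x

lemma sqrt_pos' (x : ℝ) : 0 < Real.sqrt (x ^ 2 + 4) := Real.sqrt_pos.mpr (by positivity)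

lemma sqrt_sq' (x : ℝ) : Real.sqrt (x ^ 2 + 4) ^ 2 = x ^ 2 + 4 :=
  Real.sq_sqrt (by positivity)

lemma pdf_hasDeriv (x : ℝ) : HasDerivAt stdNormalPdf (-x * stdNormalPdf x) x := by
  have h : HasDerivAt (fun u : ℝ => -u ^ 2 / 2) (-x) x := by
    have := ((hasDerivAt_pow 2 x).neg).div_const 2
    exact this.congr_deriv (by push_cast; ring)
  have h2 := (h.exp).const_mul (Real.sqrt (2 * Real.pi))⁻¹
  refine h2.congr_deriv ?_
  unfold stdNormalPdf; ring

lemma sqrt_hasDeriv (x : ℝ) :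
    HasDerivAt (fun u => Real.sqrt (u ^ 2 + 4)) (x / Real.sqrt (x ^ 2 + 4)) x := by
  have h : HasDerivAt (fun u : ℝ => u ^ 2 + 4) (2 * x) x := by
    have := (hasDerivAt_pow 2 x).add_const 4
    exact this.congr_deriv (by push_cast; ring)
  have := (Real.hasDerivAt_sqrt (by positivity : (x:ℝ) ^ 2 + 4 ≠ 0)).comp x h
  exact this.congr_deriv (by field_simp)

lemma gAux_hasDeriv (x : ℝ) :
    HasDerivAt gAux (stdNormalPdf x *
      (-1 - x / Real.sqrt (x ^ 2 + 4) - x ^ 2 + x * Real.sqrt (x ^ 2 + 4))) x := by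
  have h1 := (gaussQ_hasDeriv x).const_mul 2
  have h2 := ((hasDerivAt_id x).sub (sqrt_hasDeriv x)).mul (pdf_hasDeriv x)
  have h := h1.add h2
  refine HasDerivAt.congr_deriv h ?_
  simp only [Pi.sub_apply, id_eq]
  ring

lemma gAux_deriv_neg (x : ℝ) :
    stdNormalPdf x *
      (-1 - x / Real.sqrt (x ^ 2 + 4) - x ^ 2 + x * Real.sqrt (x ^ 2 + 4)) < 0 := by
  have hs := sqrt_pos' x
  have hsq := sqrt_sq' x
  have hf := pdf_pos x
  set s := Real.sqrt (x ^ 2 + 4) with hsdef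
  have hA2 : (s * (1 + x ^ 2)) ^ 2 = (x ^ 3 + 3 * x) ^ 2 + 4 := by
    rw [mul_pow, hsq]; ring
  have key : x ^ 3 + 3 * x < s * (1 + x ^ 2) := by
    nlinarith [hA2, mul_pos hs (by positivity : (0:ℝ) < 1 + x ^ 2)]
  have hA : (-1 - x / s - x ^ 2 + x * s) * s = x ^ 3 + 3 * x - s * (1 + x ^ 2) := by
    field_simp
    linear_combination x * hsq
  have hAneg : -1 - x / s - x ^ 2 + x * s < 0 := by nlinarith
  nlinarith

lemma pdf_tendsto : Tendsto stdNormalPdf atTop (nhds 0) := by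
  have h1 : Tendsto (fun x : ℝ => -x ^ 2 / 2) atTop atBot := by
    have h := tendsto_pow_atTop (α := ℝ) (n := 2) (by norm_num)
    have := (Filter.tendsto_neg_atBot_iff.mpr h).atBot_div_const (by norm_num : (0:ℝ) < 2)
    simpa using this
  have h2 := (Real.tendsto_exp_atBot).comp h1
  have := h2.const_mul (Real.sqrt (2 * Real.pi))⁻¹
  rw [mul_zero] at this
  exact this

lemma gAux_tendsto : Tendsto gAux atTop (nhds 0) := by
  have hQ := gaussQ_tendsto.const_mul 2
  rw [mul_zero] at hQ
  have hsec : Tendsto (fun x => (x - Real.sqrt (x ^ 2 + 4)) * stdNormalPdf x) atTop (nhds 0) := by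
    have hlo : Tendsto (fun x : ℝ => -(2 * stdNormalPdf x)) atTop (nhds 0) := by
      have := (pdf_tendsto.const_mul 2).neg
      simpa using this
    refine tendsto_of_tendsto_of_tendsto_of_le_of_le' hlo tendsto_const_nhds ?_ ?_
    · filter_upwards [eventually_ge_atTop (0:ℝ)] with x hx
      have hf := (pdf_pos x).le
      have hs2 : Real.sqrt (x ^ 2 + 4) ≤ x + 2 := by
        rw [show x ^ 2 + 4 = (x+2)^2 - 4*x by ring]
        calc Real.sqrt ((x+2)^2 - 4*x) ≤ Real.sqrt ((x+2)^2) :=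
              Real.sqrt_le_sqrt (by nlinarith)
          _ = x + 2 := Real.sqrt_sq (by linarith)
      nlinarith
    · filter_upwards with x
      have hf := (pdf_pos x).le
      have hxs : x ≤ Real.sqrt (x ^ 2 + 4) := by
        nlinarith [sqrt_sq' x, sqrt_pos' x, sq_nonneg (Real.sqrt (x^2+4) - x), sq_nonneg (Real.sqrt (x^2+4) + x)]
      nlinarith
  have := hQ.add hsec
  rw [add_zero] at this
  exact this

lemma gAux_pos (x : ℝ) : 0 < gAux x := by
  have hanti : StrictAnti gAux := by
    apply strictAnti_of_deriv_neg
    intro y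
    rw [(gAux_hasDeriv y).deriv]
    exact gAux_deriv_neg y
  have h1 : 0 ≤ gAux (x + 1) := by
    refine le_of_tendsto gAux_tendsto ?_
    filter_upwards [eventually_ge_atTop (x + 1)] with y hy
    exact hanti.antitone hy
  have := hanti (show x < x + 1 by linarith)
  linarith

theorem stmt6 (x₁ x₂ : ℝ) :
    2 * (gaussQ x₁ + gaussPhi x₂) + (x₁ * stdNormalPdf x₁ - x₂ * stdNormalPdf x₂)
      - (Real.sqrt (x₁ ^ 2 + 4) * stdNormalPdf x₁ + Real.sqrt (x₂ ^ 2 + 4) * stdNormalPdf x₂)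
      > 0 := by
  have h1 := gAux_pos x₁
  have h2 := gAux_pos (-x₂)
  unfold gAux at h1 h2
  rw [pdf_even, show (-x₂) ^ 2 = x₂ ^ 2 by ring] at h2
  rw [phi_eq]
  linarith
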